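/- (Globally Q-polar sets are negligible.) Let Ω ⊆ ℍⁿ be open and v ∈ PSH(Ω), and assume there exists a continuous function w ∈ PSH(Ω) with w ≥ v on Ω (this hypothesis implements the paper's assumption that Ω is strongly pseudoconvex with smooth boundary, where such a smooth PSH majorant exists). Then the set P = {q ∈ Ω : v(q) = -∞} is negligible: with u_α = (1-α)v + αw for α ∈ (0,1) and u = sup_{α∈(0,1)} u_α, one has u* = w on Ω and P = {q ∈ Ω : u(q) < u*(q)}. -/

import Mathlib

open scoped Quaternion
open MeasureTheory Metric Set Filter Topology

noncomputable section

instance : MeasurableSpace ℍ[ℝ] := borel _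
instance : BorelSpace ℍ[ℝ] := ⟨rfl⟩
instance : FiniteDimensional ℝ ℍ[ℝ] :=
  LinearEquiv.finiteDimensional
    (Quaternion.linearIsometryEquivTuple).symm.toLinearEquiv

/-- `ℍⁿ`, identified with `ℝ^{4n}` and carrying its Euclidean (ℓ²) norm. -/
abbrev Hn (n : ℕ) := PiLp 2 (fun _ : Fin n => ℍ[ℝ])

instance {n : ℕ} : MeasurableSpace (Hn n) := borel _
instance {n : ℕ} : BorelSpace (Hn n) := ⟨rfl⟩

/-- The average of a real valued function over the sphere of center `x` and radius `r`,
computed using the canonical (surface) measure on the unit sphere of `ℍ`. -/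
def sphereAvg (h : ℍ[ℝ] → ℝ) (x : ℍ[ℝ]) (r : ℝ) : ℝ :=
  ⨍ z : sphere (0 : ℍ[ℝ]) 1, h (x + r • (z : ℍ[ℝ])) ∂(volume.toSphere)

/-- The sub-mean value inequality on `D`: for every closed ball contained in `D`,
`v x` is bounded by the average over the boundary sphere of every continuous real-valued
function dominating `v` on that sphere.  (For an upper semicontinuous `v` this is
equivalent to `v x ≤` the average of `v` over the sphere.) -/
def SubMeanOn (v : ℍ[ℝ] → EReal) (D : Set ℍ[ℝ]) : Prop :=
  ∀ x r, 0 < r → closedBall x r ⊆ D →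
    ∀ h : ℍ[ℝ] → ℝ, Continuous h → (∀ z ∈ sphere x r, v z ≤ (h z : EReal)) →
      v x ≤ (sphereAvg h x r : EReal)

/-- `v` is subharmonic on the open set `D ⊆ ℍ`: upper semicontinuous, takes values in
`[-∞, ∞)`, is not identically `-∞` on any connected component of `D`, and satisfies the
sub-mean value inequality. -/
def SubharmonicOn (v : ℍ[ℝ] → EReal) (D : Set ℍ[ℝ]) : Prop :=
  UpperSemicontinuousOn v D ∧ (∀ x ∈ D, v x ≠ ⊤) ∧
    (∀ x ∈ D, ∃ y ∈ connectedComponentIn D x, v y ≠ ⊥) ∧ SubMeanOn v D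

/-- Componentwise right multiplication `b·q = (b₁q, …, bₙq)`. -/
def qmul {n : ℕ} (b : Hn n) (q : ℍ[ℝ]) : Hn n := WithLp.toLp 2 (fun i => b i * q)

/-- The parameter set of the quaternionic line `q ↦ a + b·q` inside `Ω`. -/
def sliceSet {n : ℕ} (Ω : Set (Hn n)) (a b : Hn n) : Set ℍ[ℝ] :=
  {q : ℍ[ℝ] | a + qmul b q ∈ Ω}

/-- The restriction of `u` to the quaternionic line `q ↦ a + b·q`. -/
def sliceFun {n : ℕ} (u : Hn n → EReal) (a b : Hn n) : ℍ[ℝ] → EReal :=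
  fun q => u (a + qmul b q)

/-- `u` is quaternionic plurisubharmonic on `Ω ⊆ ℍⁿ`: `u` is upper semicontinuous on `Ω`,
takes values in `[-∞,∞)`, is not identically `-∞` on any connected component of `Ω`, and
for all `a b : ℍⁿ` the function `q ↦ u (a + b·q)` is subharmonic or identically `-∞` on
every connected component of `{q : ℍ | a + b·q ∈ Ω}`. -/
def QPSHOn {n : ℕ} (u : Hn n → EReal) (Ω : Set (Hn n)) : Prop :=
  UpperSemicontinuousOn u Ω ∧ (∀ x ∈ Ω, u x ≠ ⊤) ∧
    (∀ x ∈ Ω, ∃ y ∈ connectedComponentIn Ω x, u y ≠ ⊥) ∧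
    ∀ a b : Hn n, ∀ q₀ ∈ sliceSet Ω a b,
      SubharmonicOn (sliceFun u a b) (connectedComponentIn (sliceSet Ω a b) q₀) ∨
        ∀ q ∈ connectedComponentIn (sliceSet Ω a b) q₀, sliceFun u a b q = ⊥

/-- Upper semicontinuous regularization within `Ω`: `u*(q) = limsup_{q'→q, q'∈Ω} u(q')`. -/
def uscReg {n : ℕ} (u : Hn n → EReal) (Ω : Set (Hn n)) : Hn n → EReal :=
  fun q => Filter.limsup u (nhdsWithin q Ω)

/-- `u` is locally bounded from above on `Ω`. -/
def LocallyBddAboveOn {n : ℕ} (u : Hn n → EReal) (Ω : Set (Hn n)) : Prop :=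
  ∀ q ∈ Ω, ∃ s ∈ 𝓝 q, ∃ M : ℝ, ∀ x ∈ s ∩ Ω, u x ≤ (M : EReal)

/-! ### Auxiliary lemmas -/

open scoped Pointwise ENNReal in
lemma cap_smul_pos {δ : ℝ} (hδ : 0 < δ) :
    0 < (volume : Measure ℍ[ℝ]) (Set.Ioo (0:ℝ) 1 •
      ((↑) '' {z : sphere (0:ℍ[ℝ]) 1 | ‖(z : ℍ[ℝ]) - 1‖ < δ})) := by
  set r₀ : ℝ := min (δ/32) 4⁻¹ with hr₀
  have hr₀pos : 0 < r₀ := lt_min (by linarith) (by norm_num)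
  have hsub : ball ((2⁻¹:ℝ) • (1:ℍ[ℝ])) r₀ ⊆ Set.Ioo (0:ℝ) 1 •
      ((↑) '' {z : sphere (0:ℍ[ℝ]) 1 | ‖(z : ℍ[ℝ]) - 1‖ < δ}) := by
    intro x hx
    rw [mem_ball, dist_eq_norm] at hx
    have hc : ‖(2⁻¹:ℝ) • (1:ℍ[ℝ])‖ = 2⁻¹ := by
      rw [norm_smul, norm_one]; norm_num
    have hdiff : |‖x‖ - 2⁻¹| < r₀ := by
      calc |‖x‖ - 2⁻¹| = |‖x‖ - ‖(2⁻¹:ℝ) • (1:ℍ[ℝ])‖| := by rw [hc]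
        _ ≤ ‖x - (2⁻¹:ℝ) • (1:ℍ[ℝ])‖ := abs_norm_sub_norm_le _ _
        _ < r₀ := hx
    have hr14 : r₀ ≤ 4⁻¹ := min_le_right _ _
    have hrδ : r₀ ≤ δ/32 := min_le_left _ _
    have habs := abs_lt.mp hdiff
    have hx1 : (4:ℝ)⁻¹ < ‖x‖ := by linarith [habs.1]
    have hx2 : ‖x‖ < 1 := by linarith [habs.2]
    have hxpos : (0:ℝ) < ‖x‖ := by positivity
    have hxne : ‖x‖ ≠ 0 := ne_of_gt hxpos
    have hsmul : ‖x‖ • (‖x‖⁻¹ • x - (1:ℍ[ℝ])) = x - ‖x‖ • (1:ℍ[ℝ]) := by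
      rw [smul_sub, smul_smul, mul_inv_cancel₀ hxne, one_smul]
    have key : ‖‖x‖⁻¹ • x - (1:ℍ[ℝ])‖ * ‖x‖ = ‖x - ‖x‖ • (1:ℍ[ℝ])‖ := by
      rw [← hsmul, norm_smul, Real.norm_eq_abs, abs_of_pos hxpos, mul_comm]
    have hnum : ‖x - ‖x‖ • (1:ℍ[ℝ])‖ < 2 * r₀ := by
      have tri : ‖x - ‖x‖ • (1:ℍ[ℝ])‖ ≤ ‖x - (2⁻¹:ℝ) • (1:ℍ[ℝ])‖ +
          ‖(2⁻¹:ℝ) • (1:ℍ[ℝ]) - ‖x‖ • (1:ℍ[ℝ])‖ := by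
        have := dist_triangle x ((2⁻¹:ℝ) • (1:ℍ[ℝ])) (‖x‖ • (1:ℍ[ℝ]))
        simpa [dist_eq_norm] using this
      have h2 : ‖(2⁻¹:ℝ) • (1:ℍ[ℝ]) - ‖x‖ • (1:ℍ[ℝ])‖ = |2⁻¹ - ‖x‖| := by
        rw [← sub_smul, norm_smul, norm_one, Real.norm_eq_abs, mul_one]
      rw [h2, abs_sub_comm] at tri
      linarith
    have hcap : ‖(‖x‖⁻¹ • x) - (1:ℍ[ℝ])‖ < δ := by
      nlinarith [norm_nonneg ((‖x‖⁻¹ • x) - (1:ℍ[ℝ]))]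
    refine ⟨‖x‖, ⟨hxpos, hx2⟩, (‖x‖⁻¹ • x : ℍ[ℝ]), ?_, by
      simp [smul_smul, mul_inv_cancel₀ hxne]⟩
    exact ⟨⟨‖x‖⁻¹ • x, by
      simp [norm_smul, abs_of_pos (inv_pos.mpr hxpos), inv_mul_cancel₀ hxne]⟩, hcap, rfl⟩
  calc (0:ℝ≥0∞) < volume (ball ((2⁻¹:ℝ) • (1:ℍ[ℝ])) r₀) := measure_ball_pos _ _ hr₀pos
    _ ≤ _ := measure_mono hsub

open scoped ENNReal in
lemma cap_meas_pos {δ : ℝ} (hδ : 0 < δ) :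
    0 < (volume : Measure ℍ[ℝ]).toSphere
      {z : sphere (0:ℍ[ℝ]) 1 | ‖(z : ℍ[ℝ]) - 1‖ < δ} := by
  have hms : MeasurableSet {z : sphere (0:ℍ[ℝ]) 1 | ‖(z : ℍ[ℝ]) - 1‖ < δ} := by
    have : Continuous fun z : sphere (0:ℍ[ℝ]) 1 => ‖(z : ℍ[ℝ]) - 1‖ :=
      (continuous_subtype_val.sub continuous_const).norm
    exact (isOpen_lt this continuous_const).measurableSet
  rw [Measure.toSphere_apply' _ hms]
  refine ENNReal.mul_pos ?_ (cap_smul_pos hδ).ne'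
  simp [Module.finrank_pos.ne']

open scoped ENNReal in
lemma toSphere_univ_pos :
    0 < ((volume : Measure ℍ[ℝ]).toSphere Set.univ).toReal := by
  refine ENNReal.toReal_pos ?_ (measure_ne_top _ _)
  rw [Measure.toSphere_apply_univ]
  exact (ENNReal.mul_pos (by simp [Module.finrank_pos.ne'])
    (measure_ball_pos _ _ one_pos).ne').ne'

lemma phi_cont (δ : ℝ) : Continuous fun z : ℍ[ℝ] => max 0 (1 - ‖z - 1‖/δ) :=
  continuous_const.max (continuous_const.sub
    ((continuous_id.sub continuous_const).norm.div_const δ))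

lemma phi_integral_pos {δ : ℝ} (hδ : 0 < δ) :
    0 < ∫ z : sphere (0:ℍ[ℝ]) 1, max 0 (1 - ‖(z:ℍ[ℝ]) - 1‖/δ) ∂(volume.toSphere) := by
  set μ := (volume : Measure ℍ[ℝ]).toSphere
  set φ : sphere (0:ℍ[ℝ]) 1 → ℝ := fun z => max 0 (1 - ‖(z:ℍ[ℝ]) - 1‖/δ) with hφ
  have hφc : Continuous φ := (phi_cont δ).comp continuous_subtype_val
  have hint : Integrable φ μ :=
    hφc.integrable_of_hasCompactSupport
      (HasCompactSupport.of_compactSpace _)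
  set U := {z : sphere (0:ℍ[ℝ]) 1 | ‖(z : ℍ[ℝ]) - 1‖ < δ/2}
  have hUm : MeasurableSet U := by
    have : Continuous fun z : sphere (0:ℍ[ℝ]) 1 => ‖(z : ℍ[ℝ]) - 1‖ :=
      (continuous_subtype_val.sub continuous_const).norm
    exact (isOpen_lt this continuous_const).measurableSet
  have h1 : (2:ℝ)⁻¹ * (μ U).toReal ≤ ∫ z in U, φ z ∂μ := by
    refine setIntegral_ge_of_const_le_real hUm (measure_ne_top _ _) (fun z hz => ?_)
      (hint.integrableOn)
    have : ‖(z:ℍ[ℝ]) - 1‖/δ < 2⁻¹ := by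
      rw [div_lt_iff₀ hδ]; have : ‖(z:ℍ[ℝ]) - 1‖ < δ/2 := hz; linarith
    simp only [hφ, le_max_iff]; right; linarith
  have h2 : ∫ z in U, φ z ∂μ ≤ ∫ z, φ z ∂μ :=
    setIntegral_le_integral hint (Filter.Eventually.of_forall fun z => le_max_left _ _)
  have h3 : 0 < (μ U).toReal :=
    ENNReal.toReal_pos (cap_meas_pos (by linarith)).ne' (measure_ne_top _ _)
  linarith

lemma exists_M {δ C : ℝ} (hδ : 0 < δ) (t : ℝ) :
    ∃ M : ℝ, 0 ≤ M ∧
      sphereAvg (fun z => C - M * max 0 (1 - ‖z - 1‖/δ)) 0 1 ≤ t := by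
  set μ := (volume : Measure ℍ[ℝ]).toSphere
  set φ : sphere (0:ℍ[ℝ]) 1 → ℝ := fun z => max 0 (1 - ‖(z:ℍ[ℝ]) - 1‖/δ) with hφ
  have hφc : Continuous φ := (phi_cont δ).comp continuous_subtype_val
  have hint : Integrable φ μ :=
    hφc.integrable_of_hasCompactSupport (HasCompactSupport.of_compactSpace _)
  set T := (μ Set.univ).toReal with hT
  set I := ∫ z, φ z ∂μ with hI
  have hTpos : 0 < T := toSphere_univ_pos
  have hIpos : 0 < I := phi_integral_pos hδ
  set M : ℝ := max 0 ((C - t)*T/I) with hM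
  have hM0 : 0 ≤ M := le_max_left _ _
  refine ⟨M, hM0, ?_⟩
  have havg : sphereAvg (fun z => C - M * max 0 (1 - ‖z - 1‖/δ)) 0 1
      = T⁻¹ * (T * C - M * I) := by
    unfold sphereAvg
    simp only [one_smul, zero_add]
    rw [average_eq]
    have : ∫ z : sphere (0:ℍ[ℝ]) 1, (C - M * φ z) ∂μ = T * C - M * I := by
      rw [integral_sub (integrable_const C) (hint.const_mul M),
        integral_const, MeasureTheory.integral_const_mul, smul_eq_mul]
      rfl
    rw [show (fun z : sphere (0:ℍ[ℝ]) 1 =>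
      C - M * max 0 (1 - ‖(z:ℍ[ℝ]) - 1‖/δ)) = fun z => C - M * φ z from rfl] at *
    rw [this, smul_eq_mul]
    rfl
  rw [havg]
  have hMI : (C - t) * T ≤ M * I := by
    rcases le_or_gt (C - t) 0 with h | h
    · nlinarith
    · have : (C - t)*T/I ≤ M := le_max_right _ _
      calc (C - t) * T = ((C - t)*T/I) * I := by field_simp
        _ ≤ M * I := by nlinarith
  have : T * C - M * I ≤ t * T := by nlinarith
  calc T⁻¹ * (T * C - M * I) ≤ T⁻¹ * (t * T) := by
        exact mul_le_mul_of_nonneg_left this (by positivity)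
    _ = t := by field_simp

lemma qmul_norm_le {n : ℕ} (b : Hn n) (q : ℍ[ℝ]) : ‖qmul b q‖ ≤ ‖b‖ * ‖q‖ := by
  have h1 := PiLp.norm_eq_of_L2 (qmul b q)
  have h2 := PiLp.norm_eq_of_L2 b
  rw [h1, h2]
  have h3 : ∀ i : Fin n, ‖qmul b q i‖ ^ 2 = ‖b i‖ ^ 2 * ‖q‖ ^ 2 := by
    intro i; rw [show qmul b q i = b i * q from rfl, norm_mul]; ring
  simp_rw [h3]
  rw [← Finset.sum_mul,
    Real.sqrt_mul (Finset.sum_nonneg fun i _ => sq_nonneg _),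
    Real.sqrt_sq (norm_nonneg q)]

lemma qmul_zero {n : ℕ} (b : Hn n) : qmul b 0 = 0 := by
  refine PiLp.ext fun i => ?_; simp [qmul]

lemma add_qmul_sub {n : ℕ} (y p : Hn n) (z : ℍ[ℝ]) :
    y + qmul (p - y) z - p = qmul (p - y) (z - 1) := by
  refine PiLp.ext fun i => ?_
  show y i + (p i - y i) * z - p i = (p i - y i) * (z - 1)
  noncomm_ring

lemma key_step {n : ℕ} {Ω : Set (Hn n)} {v : Hn n → EReal}
    (hv4 : ∀ a b : Hn n, ∀ q₀ ∈ sliceSet Ω a b,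
      SubharmonicOn (sliceFun v a b) (connectedComponentIn (sliceSet Ω a b) q₀) ∨
        ∀ q ∈ connectedComponentIn (sliceSet Ω a b) q₀, sliceFun v a b q = ⊥)
    {w : Hn n → ℝ} (hwc : ContinuousOn w Ω) (hge : ∀ q ∈ Ω, v q ≤ ((w q : ℝ) : EReal))
    {x : Hn n} {R : ℝ} (hR : 0 < R) (hRΩ : closedBall x R ⊆ Ω)
    {p : Hn n} (hpx : dist p x < R/8) {ρ : ℝ} (hρ : 0 < ρ) (hρR : ρ ≤ R/8)
    (hbot : ∀ z ∈ ball p ρ, v z = ⊥) :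
    ∀ y ∈ ball x (R/8), v y = ⊥ := by
  intro y hy
  rw [mem_ball] at hy
  rcases eq_or_ne p y with rfl | hpy
  · exact hbot p (mem_ball_self hρ)
  set b : Hn n := p - y with hb
  have hbne : b ≠ 0 := sub_ne_zero.mpr hpy
  have hbpos : 0 < ‖b‖ := norm_pos_iff.mpr hbne
  have hbR : ‖b‖ < R/4 := by
    have : dist p y ≤ dist p x + dist x y := dist_triangle _ _ _
    have hxy : dist x y < R/8 := by rwa [dist_comm]
    calc ‖b‖ = dist p y := (dist_eq_norm p y).symm
      _ < R/4 := by linarith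
  -- points on the slice stay in Ω
  have hmem : ∀ z : ℍ[ℝ], ‖z‖ ≤ 2 → y + qmul b z ∈ closedBall x R := by
    intro z hz
    rw [mem_closedBall]
    calc dist (y + qmul b z) x ≤ dist (y + qmul b z) y + dist y x := dist_triangle _ _ _
      _ = ‖qmul b z‖ + dist y x := by rw [dist_eq_norm, add_sub_cancel_left]
      _ ≤ ‖b‖ * ‖z‖ + R/8 := by
        have h1 := qmul_norm_le b z
        have h2 : dist y x < R/8 := hy
        linarith
      _ ≤ R := by nlinarith
  have h0 : (0:ℍ[ℝ]) ∈ sliceSet Ω y b := by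
    show y + qmul b 0 ∈ Ω
    rw [qmul_zero, add_zero]
    exact hRΩ (mem_closedBall.mpr (by linarith [hy] : dist y x ≤ R))
  have hsub2 : closedBall (0:ℍ[ℝ]) 2 ⊆ sliceSet Ω y b := by
    intro z hz
    rw [mem_closedBall, dist_zero_right] at hz
    exact hRΩ (hmem z hz)
  set K := connectedComponentIn (sliceSet Ω y b) 0 with hK
  have hK2 : closedBall (0:ℍ[ℝ]) 2 ⊆ K :=
    (convex_closedBall _ _).isPreconnected.subset_connectedComponentIn
      (mem_closedBall_self (by norm_num)) hsub2
  have hvy : v y = sliceFun v y b 0 := by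
    rw [sliceFun, qmul_zero, add_zero]
  rcases hv4 y b 0 h0 with hsh | hbot'
  · -- subharmonic case
    obtain ⟨z₀, hz₀, hCmax'⟩ := (isCompact_closedBall x R).exists_isMaxOn
      ⟨x, mem_closedBall_self hR.le⟩ (hwc.mono hRΩ)
    set C := w z₀ with hC
    have hCmax : ∀ z ∈ closedBall x R, w z ≤ C := fun z hz => hCmax' hz
    set δ := min (ρ/‖b‖) 1 with hδdef
    have hδ : 0 < δ := lt_min (div_pos hρ hbpos) one_pos
    have hδρ : δ ≤ ρ/‖b‖ := min_le_left _ _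
    rw [hvy, EReal.eq_bot_iff_forall_lt]
    intro t
    obtain ⟨M, hM0, hMe⟩ := exists_M hδ (t - 1)
    set h : ℍ[ℝ] → ℝ := fun z => C - M * max 0 (1 - ‖z - 1‖/δ) with hh
    have hhc : Continuous h := continuous_const.sub (continuous_const.mul (phi_cont δ))
    have hdom : ∀ z ∈ sphere (0:ℍ[ℝ]) 1, sliceFun v y b z ≤ ((h z : ℝ) : EReal) := by
      intro z hz
      rw [mem_sphere_zero_iff_norm] at hz
      rcases lt_or_ge ‖z - 1‖ δ with hlt | hge'
      · have hptp : y + qmul b z ∈ ball p ρ := by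
          rw [mem_ball, dist_eq_norm, add_qmul_sub y p z]
          calc ‖qmul (p - y) (z - 1)‖ ≤ ‖b‖ * ‖z - 1‖ := qmul_norm_le _ _
            _ < ‖b‖ * (ρ/‖b‖) := by
              apply mul_lt_mul_of_pos_left (lt_of_lt_of_le hlt hδρ) hbpos
            _ = ρ := by field_simp
        rw [sliceFun, hbot _ hptp]
        exact bot_le
      · have hmax0 : max 0 (1 - ‖z - 1‖/δ) = 0 := by
          apply max_eq_left
          have : (1:ℝ) ≤ ‖z - 1‖/δ := (one_le_div hδ).mpr hge'
          linarith
        have hhz : h z = C := by rw [hh]; simp [hmax0]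
        have hpt : y + qmul b z ∈ closedBall x R := hmem z (by rw [hz]; norm_num)
        have h1 : v (y + qmul b z) ≤ ((w (y + qmul b z) : ℝ) : EReal) :=
          hge _ (hRΩ hpt)
        have h2 : w (y + qmul b z) ≤ C := hCmax _ hpt
        rw [hhz]
        exact h1.trans (EReal.coe_le_coe_iff.mpr h2)
    have hsm := hsh.2.2.2 0 1 one_pos
      ((closedBall_subset_closedBall (by norm_num)).trans hK2) h hhc hdom
    calc sliceFun v y b 0 ≤ ((sphereAvg h 0 1 : ℝ) : EReal) := hsm
      _ ≤ ((t - 1 : ℝ) : EReal) := EReal.coe_le_coe_iff.mpr hMe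
      _ < (t : EReal) := EReal.coe_lt_coe_iff.mpr (by linarith)
  · rw [hvy]
    exact hbot' 0 (mem_connectedComponentIn h0)

lemma no_bot_ball {n : ℕ} {Ω : Set (Hn n)} (hΩ : IsOpen Ω) {v : Hn n → EReal}
    (hv : QPSHOn v Ω) {w : Hn n → ℝ} (hwc : ContinuousOn w Ω)
    (hge : ∀ q ∈ Ω, v q ≤ ((w q : ℝ) : EReal))
    {q : Hn n} (hq : q ∈ Ω) {ε : ℝ} (hε : 0 < ε) (hball : ball q ε ⊆ Ω)
    (hb : ∀ z ∈ ball q ε, v z = ⊥) : False := by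
  set A : Set (Hn n) := {x | ∃ δ : ℝ, 0 < δ ∧ ball x δ ⊆ Ω ∧ ∀ z ∈ ball x δ, v z = ⊥}
    with hA
  have hqA : q ∈ A := ⟨ε, hε, hball, hb⟩
  have hAopen : IsOpen A := by
    rw [Metric.isOpen_iff]
    rintro x ⟨δ, hδ, hδΩ, hδb⟩
    refine ⟨δ/2, by linarith, fun x' hx' => ?_⟩
    rw [mem_ball] at hx'
    refine ⟨δ/2, by linarith, fun z hz => hδΩ ?_, fun z hz => hδb z ?_⟩ <;>
    · rw [mem_ball] at hz ⊢
      have := dist_triangle z x' x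
      linarith
  set C := connectedComponentIn Ω q with hC
  have hCopen : IsOpen C := hΩ.connectedComponentIn
  have hCconn : IsPreconnected C := isPreconnected_connectedComponentIn
  have hqC : q ∈ C := mem_connectedComponentIn hq
  have hCΩ : C ⊆ Ω := connectedComponentIn_subset _ _
  -- every point of C in the closure of A lies in A
  have hclos : ∀ x ∈ C, x ∈ closure A → x ∈ A := by
    intro x hxC hxcl
    obtain ⟨ε', hε', hε'Ω⟩ := Metric.isOpen_iff.mp hΩ x (hCΩ hxC)
    set R := ε'/2 with hR
    have hRpos : 0 < R := by linarith
    have hRΩ : closedBall x R ⊆ Ω := by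
      refine subset_trans ?_ hε'Ω
      intro z hz
      rw [mem_closedBall] at hz
      rw [mem_ball]
      linarith
    obtain ⟨p, hpA, hpd⟩ := Metric.mem_closure_iff.mp hxcl (R/16) (by linarith)
    obtain ⟨δp, hδp, hδpΩ, hδpb⟩ := hpA
    set ρ := min δp (R/8) with hρdef
    have hρ : 0 < ρ := lt_min hδp (by linarith)
    have hρR : ρ ≤ R/8 := min_le_right _ _
    have hbotρ : ∀ z ∈ ball p ρ, v z = ⊥ := fun z hz =>
      hδpb z (ball_subset_ball (min_le_left _ _) hz)
    have hpx : dist p x < R/8 := by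
      rw [dist_comm]; linarith
    have hkey := key_step hv.2.2.2 hwc hge hRpos hRΩ hpx hρ hρR hbotρ
    exact ⟨R/8, by linarith, fun z hz =>
      hRΩ (closedBall_subset_closedBall (by linarith : R/8 ≤ R)
        (ball_subset_closedBall hz)), hkey⟩
  -- C is covered by two disjoint open sets
  have hcover : C ⊆ A ∪ (C ∩ (closure A)ᶜ) := by
    intro x hx
    by_cases hxcl : x ∈ closure A
    · exact Or.inl (hclos x hx hxcl)
    · exact Or.inr ⟨hx, hxcl⟩
  have hdisj : Disjoint A (C ∩ (closure A)ᶜ) :=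
    Disjoint.mono_left subset_closure (disjoint_compl_right.mono_right inter_subset_right)
  have hCA : C ⊆ A :=
    hCconn.subset_left_of_subset_union hAopen
      (hCopen.inter isClosed_closure.isOpen_compl) hdisj hcover ⟨q, hqC, hqA⟩
  obtain ⟨y, hyC, hyne⟩ := hv.2.2.1 q hq
  obtain ⟨δy, hδy, _, hδyb⟩ := hCA hyC
  exact hyne (hδyb y (mem_ball_self hδy))

instance ioo_nonempty : Nonempty (Set.Ioo (0:ℝ) 1) :=
  ⟨⟨2⁻¹, by norm_num, by norm_num⟩⟩

/-- value of the sup when `v q = ⊥`. -/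
lemma usup_bot {vq : EReal} (hvq : vq = ⊥) (wq : ℝ) :
    (⨆ α : Set.Ioo (0:ℝ) 1,
      (((1 - (α : ℝ)) : ℝ) : EReal) * vq + (((α : ℝ) : ℝ) : EReal) * ((wq : ℝ) : EReal)) = ⊥ := by
  subst hvq
  rw [iSup_eq_bot]
  intro α
  rw [EReal.coe_mul_bot_of_pos (by linarith [α.2.2] : (0:ℝ) < 1 - (α:ℝ)), EReal.bot_add]

/-- value of the sup when `v q` is real and `≤ w q`. -/
lemma usup_real {r wq : ℝ} (hr : r ≤ wq) :
    (⨆ α : Set.Ioo (0:ℝ) 1,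
      (((1 - (α : ℝ)) : ℝ) : EReal) * ((r:ℝ) : EReal) + (((α : ℝ) : ℝ) : EReal) * ((wq : ℝ) : EReal))
      = ((wq : ℝ) : EReal) := by
  have hterm : ∀ α : Set.Ioo (0:ℝ) 1,
      (((1 - (α : ℝ)) : ℝ) : EReal) * ((r:ℝ) : EReal) + (((α : ℝ) : ℝ) : EReal) * ((wq : ℝ) : EReal)
        = (((1 - (α:ℝ)) * r + (α:ℝ) * wq : ℝ) : EReal) := by
    intro α; rw [← EReal.coe_mul, ← EReal.coe_mul, ← EReal.coe_add]
  simp_rw [hterm]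
  apply le_antisymm
  · refine iSup_le fun α => EReal.coe_le_coe_iff.mpr ?_
    nlinarith [α.2.1, α.2.2]
  · rcases eq_or_lt_of_le hr with rfl | hlt
    · refine le_trans ?_ (le_iSup _ ⟨2⁻¹, by norm_num, by norm_num⟩)
      apply le_of_eq
      congr 1
      ring
    · refine le_of_forall_lt fun c hc => ?_
      obtain ⟨c', hc1, hc2⟩ := EReal.exists_between_coe_real hc
      rw [EReal.coe_lt_coe_iff] at hc2
      set β : ℝ := min 1 ((wq - c')/(wq - r)) / 2 with hβ
      have hβ1 : β ≤ 1/2 := by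
        have : min 1 ((wq - c')/(wq - r)) ≤ 1 := min_le_left _ _
        rw [hβ]; linarith
      have hβ0 : 0 < β := by
        have h1 : (0:ℝ) < (wq - c')/(wq - r) := div_pos (by linarith) (by linarith)
        have : 0 < min 1 ((wq - c')/(wq - r)) := lt_min one_pos h1
        rw [hβ]; linarith
      have hβsub : β * (wq - r) < wq - c' := by
        have h2 : min 1 ((wq - c')/(wq - r)) ≤ (wq - c')/(wq - r) := min_le_right _ _
        have h3 : β ≤ (wq - c')/(wq - r) / 2 := by rw [hβ]; linarith
        have hne : wq - r ≠ 0 := by linarith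
        have h4 : (wq - c')/(wq - r) / 2 * (wq - r) = (wq - c')/2 := by
          field_simp
        nlinarith
      set α : Set.Ioo (0:ℝ) 1 := ⟨1 - β, by constructor <;> linarith⟩ with hα
      refine lt_of_lt_of_le ?_
        (le_iSup (fun α : Set.Ioo (0:ℝ) 1 =>
          (((1 - (α:ℝ)) * r + (α:ℝ) * wq : ℝ) : EReal)) α)
      refine lt_trans hc1 (EReal.coe_lt_coe_iff.mpr ?_)
      have hαv : (α : ℝ) = 1 - β := rfl
      rw [hαv]
      nlinarith

lemma ereal_exists_coe {x : EReal} (h1 : x ≠ ⊥) (h2 : x ≠ ⊤) : ∃ r : ℝ, x = (r : EReal) := by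
  induction x with
  | bot => exact absurd rfl h1
  | coe r => exact ⟨r, rfl⟩
  | top => exact absurd rfl h2

/-- **Globally Q-polar sets are negligible.** If `v ∈ PSH(Ω)` admits a continuous PSH
majorant `w`, then with `u_α = (1-α)v + αw` for `α ∈ (0,1)` and `u = sup_α u_α` one has
`u* = w` on `Ω` and `{v = -∞} = {u < u*}`; in particular `P = {v = -∞}` is negligible. -/
theorem qpolar_negligible {n : ℕ} (Ω : Set (Hn n)) (hΩ : IsOpen Ω)
    (v : Hn n → EReal) (hv : QPSHOn v Ω) (w : Hn n → ℝ)
    (hw : QPSHOn (fun q => ((w q : ℝ) : EReal)) Ω) (hwc : ContinuousOn w Ω)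
    (hge : ∀ q ∈ Ω, v q ≤ ((w q : ℝ) : EReal)) :
    (∀ q ∈ Ω,
        uscReg (fun q' => ⨆ α : Set.Ioo (0 : ℝ) 1,
          (((1 - (α : ℝ)) : ℝ) : EReal) * v q' + (((α : ℝ) : ℝ) : EReal) * ((w q' : ℝ) : EReal))
          Ω q = ((w q : ℝ) : EReal)) ∧
      {q : Hn n | q ∈ Ω ∧ v q = ⊥} =
        {q : Hn n | q ∈ Ω ∧
          (⨆ α : Set.Ioo (0 : ℝ) 1,
            (((1 - (α : ℝ)) : ℝ) : EReal) * v q + (((α : ℝ) : ℝ) : EReal) * ((w q : ℝ) : EReal)) <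
          uscReg (fun q' => ⨆ α : Set.Ioo (0 : ℝ) 1,
            (((1 - (α : ℝ)) : ℝ) : EReal) * v q' + (((α : ℝ) : ℝ) : EReal) * ((w q' : ℝ) : EReal))
            Ω q} := by
  set u : Hn n → EReal := fun q' => ⨆ α : Set.Ioo (0 : ℝ) 1,
    (((1 - (α : ℝ)) : ℝ) : EReal) * v q' + (((α : ℝ) : ℝ) : EReal) * ((w q' : ℝ) : EReal)
    with hu
  have hbotu : ∀ q ∈ Ω, v q = ⊥ → u q = ⊥ := fun q _ hb => usup_bot hb (w q)
  have heqw : ∀ q ∈ Ω, v q ≠ ⊥ → u q = ((w q : ℝ) : EReal) := by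
    intro q hq hne
    obtain ⟨r, hr⟩ := ereal_exists_coe hne (hv.2.1 q hq)
    have hrw : r ≤ w q := EReal.coe_le_coe_iff.mp (hr ▸ hge q hq)
    rw [hu]
    simp only [hr]
    exact usup_real hrw
  have hub : ∀ q ∈ Ω, u q ≤ ((w q : ℝ) : EReal) := by
    intro q hq
    by_cases hb : v q = ⊥
    · rw [hbotu q hq hb]; exact bot_le
    · rw [heqw q hq hb]
  have part1 : ∀ q ∈ Ω, uscReg u Ω q = ((w q : ℝ) : EReal) := by
    intro q hq
    have hnn : nhdsWithin q Ω = 𝓝 q := nhdsWithin_eq_nhds.mpr (hΩ.mem_nhds hq)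
    rw [uscReg, hnn]
    have hwt : Filter.Tendsto (fun q' => ((w q' : ℝ) : EReal)) (𝓝 q) (𝓝 ((w q : ℝ) : EReal)) :=
      (continuous_coe_real_ereal.tendsto _).comp (hwc.continuousAt (hΩ.mem_nhds hq))
    apply le_antisymm
    · have hev : ∀ᶠ q' in 𝓝 q, u q' ≤ ((w q' : ℝ) : EReal) :=
        Filter.eventually_of_mem (hΩ.mem_nhds hq) hub
      exact le_trans (Filter.limsup_le_limsup hev) (le_of_eq hwt.limsup_eq)
    · by_contra hcon
      rw [not_le] at hcon
      obtain ⟨c, hc1, hc2⟩ := EReal.exists_between_coe_real hcon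
      have hcw : c < w q := EReal.coe_lt_coe_iff.mp hc2
      have hev1 : ∀ᶠ q' in 𝓝 q, u q' < (c : EReal) :=
        Filter.eventually_lt_of_limsup_lt hc1
      have hev2 : ∀ᶠ q' in 𝓝 q, c < w q' :=
        (hwc.continuousAt (hΩ.mem_nhds hq)).eventually (eventually_gt_nhds hcw)
      have hev3 : ∀ᶠ q' in 𝓝 q, q' ∈ Ω := hΩ.mem_nhds hq
      have hev : ∀ᶠ q' in 𝓝 q, v q' = ⊥ := by
        filter_upwards [hev1, hev2, hev3] with q' h1 h2 h3
        by_contra hne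
        rw [heqw q' h3 hne] at h1
        exact absurd (EReal.coe_lt_coe_iff.mp h1) (not_lt.mpr h2.le)
      obtain ⟨ε, hε, hball⟩ := Metric.eventually_nhds_iff.mp (hev.and hev3)
      exact no_bot_ball hΩ hv hwc hge hq hε
        (fun z hz => (hball (mem_ball.mp hz)).2)
        (fun z hz => (hball (mem_ball.mp hz)).1)
  refine ⟨part1, ?_⟩
  ext q
  simp only [Set.mem_setOf_eq]
  constructor
  · rintro ⟨hq, hvb⟩
    refine ⟨hq, ?_⟩
    rw [show (⨆ α : Set.Ioo (0 : ℝ) 1,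
      (((1 - (α : ℝ)) : ℝ) : EReal) * v q + (((α : ℝ) : ℝ) : EReal) * ((w q : ℝ) : EReal)) = u q
      from rfl, hbotu q hq hvb, part1 q hq]
    exact EReal.bot_lt_coe _
  · rintro ⟨hq, hlt⟩
    refine ⟨hq, ?_⟩
    by_contra hne
    rw [show (⨆ α : Set.Ioo (0 : ℝ) 1,
      (((1 - (α : ℝ)) : ℝ) : EReal) * v q + (((α : ℝ) : ℝ) : EReal) * ((w q : ℝ) : EReal)) = u q
      from rfl, heqw q hq hne, part1 q hq] at hlt
    exact lt_irrefl _ hlt
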